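/- arXiv:0801.3624 — 4 statements merged into one kernel-verified Lean document; each statement's English description precedes it below -/
import Mathlib

section
/- For every integer k ≥ 2, every integer n ≥ 1, and every probability distribution μ on ({0,1}^n)^k, the k-party discrepancy of the Disjointness function satisfies disc_{k,μ}(DISJ_k) ≥ 1/(2n+1). (In particular disc_{k,μ}(DISJ_k) = Ω(1/n) under every distribution.) -/
open scoped BigOperators

/-- A `k`-cylinder in the `i`-th dimension: its value does not depend on the
`i`-th coordinate. -/
def IsCylinder {k : ℕ} {W : Type*} (i : Fin k) (ψ : (Fin k → W) → Bool) : Prop :=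
  ∀ y y' : Fin k → W, (∀ j, j ≠ i → y j = y' j) → ψ y = ψ y'

/-- A cylinder intersection: the pointwise product (conjunction) of cylinders in
dimensions `1, …, k`. -/
def IsCylinderIntersection {k : ℕ} {W : Type*} (φ : (Fin k → W) → Bool) : Prop :=
  ∃ ψ : Fin k → ((Fin k → W) → Bool),
    (∀ i, IsCylinder i (ψ i)) ∧ ∀ y, φ y = decide (∀ i, ψ i y = true)

/-- Interpret a boolean (the value of a cylinder intersection) as the real `0` or `1`. -/
noncomputable def bval (b : Bool) : ℝ := if b then 1 else 0

/-- A probability distribution on a finite set. -/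
def IsProbDist {D : Type*} [Fintype D] (μ : D → ℝ) : Prop :=
  (∀ x, 0 ≤ μ x) ∧ ∑ x, μ x = 1

/-- `disc_{k,μ}(f)`: the supremum over cylinder intersections `φ` of
`|E_{y∼μ}[f(y)φ(y)]|`. -/
noncomputable def disc {k : ℕ} {W : Type*} [Fintype W]
    (μ : (Fin k → W) → ℝ) (f : (Fin k → W) → ℝ) : ℝ :=
  sSup { t | ∃ φ, IsCylinderIntersection φ ∧ t = |∑ y, μ y * f y * bval (φ y)| }

/-- The `k`-party Disjointness function on `({0,1}^n)^k`, with values in `{-1,1}`: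
`-1` iff some index `j` has `y^1_j = ⋯ = y^k_j = 1`. -/
noncomputable def DISJ (k n : ℕ) (y : Fin k → Fin n → Bool) : ℝ :=
  if ∃ j : Fin n, ∀ i : Fin k, y i j = true then -1 else 1

/-- Under every distribution `μ`, `disc_{k,μ}(DISJ_k) ≥ 1/(2n+1)`. -/
theorem statement0 (k n : ℕ) (hk : 2 ≤ k) (hn : 1 ≤ n)
    (μ : (Fin k → Fin n → Bool) → ℝ) (hμ : IsProbDist μ) :
    (1 : ℝ) / (2 * n + 1) ≤ disc μ (DISJ k n) := by
  classical
  obtain ⟨hμ0, hμ1⟩ := hμ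
  set f := DISJ k n with hf
  set S : Set ℝ :=
    { t | ∃ φ, IsCylinderIntersection φ ∧ t = |∑ y, μ y * f y * bval (φ y)| } with hS
  have hdisc : disc μ f = sSup S := rfl
  -- bounded above by 1
  have hbdd : BddAbove S := by
    refine ⟨1, ?_⟩
    rintro t ⟨φ, -, rfl⟩
    calc |∑ y, μ y * f y * bval (φ y)| ≤ ∑ y, |μ y * f y * bval (φ y)| :=
          Finset.abs_sum_le_sum_abs _ _
      _ ≤ ∑ y, μ y := by
          apply Finset.sum_le_sum
          intro y _
          rw [abs_mul, abs_mul]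
          have hfy : |f y| = 1 := by
            rw [hf]; unfold DISJ; split <;> simp
          have hb : |bval (φ y)| ≤ 1 := by
            unfold bval; split <;> simp
          rw [hfy, abs_of_nonneg (hμ0 y), mul_one]
          nlinarith [hμ0 y]
      _ = 1 := hμ1
  -- the constant-true cylinder intersection
  have hmem0 : |∑ y, μ y * f y| ∈ S := by
    refine ⟨fun _ => true, ⟨fun _ => fun _ => true, fun i y y' _ => rfl, fun y => by simp⟩, ?_⟩
    simp [bval]
  -- the per-coordinate cylinder intersections
  have hmemj : ∀ j : Fin n,
      |∑ y, μ y * f y * bval (decide (∀ i, y i j = true))| ∈ S := by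
    intro j
    refine ⟨fun y => decide (∀ i, y i j = true),
      ⟨fun i => fun y => decide (∀ i', i' ≠ i → y i' j = true), ?_, ?_⟩, rfl⟩
    · intro i y y' hyy'
      simp only [decide_eq_decide]
      constructor
      · intro h i' hi'; rw [← hyy' i' hi']; exact h i' hi'
      · intro h i' hi'; rw [hyy' i' hi']; exact h i' hi'
    · intro y
      simp only [decide_eq_decide, decide_eq_true_eq]
      constructor
      · intro h i i' _; exact h i'
      · intro h i'
        haveI : Nontrivial (Fin k) := Fin.nontrivial_iff_two_le.mpr hk
        obtain ⟨i, hi⟩ := exists_ne i'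
        exact h i i' (Ne.symm hi)
  set d := sSup S with hd
  have hle : ∀ t ∈ S, t ≤ d := fun t ht => le_csSup hbdd ht
  -- P : probability of intersecting inputs
  set P : ℝ := ∑ y, if ∃ j : Fin n, ∀ i : Fin k, y i j = true then μ y else 0 with hP
  set Q : Fin n → ℝ := fun j => ∑ y, if ∀ i : Fin k, y i j = true then μ y else 0 with hQ
  have hT0 : ∑ y, μ y * f y = 1 - 2 * P := by
    have : ∀ y, μ y * f y
        = μ y - 2 * (if ∃ j : Fin n, ∀ i : Fin k, y i j = true then μ y else 0) := by
      intro y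
      rw [hf]; unfold DISJ
      split <;> ring
    rw [Finset.sum_congr rfl (fun y _ => this y), Finset.sum_sub_distrib, hμ1,
      ← Finset.mul_sum, hP]
  have hTj : ∀ j : Fin n,
      |∑ y, μ y * f y * bval (decide (∀ i, y i j = true))| = Q j := by
    intro j
    have : ∀ y : Fin k → Fin n → Bool, μ y * f y * bval (decide (∀ i, y i j = true))
        = -(if ∀ i : Fin k, y i j = true then μ y else 0) := by
      intro y
      by_cases h : ∀ i : Fin k, y i j = true
      · have hfy : f y = -1 := by
          rw [hf]; unfold DISJ
          rw [if_pos ⟨j, h⟩]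
        simp [h, hfy, bval]
      · simp [h, bval]
    rw [Finset.sum_congr rfl (fun y _ => this y), Finset.sum_neg_distrib, abs_neg, hQ]
    exact abs_of_nonneg (Finset.sum_nonneg fun y _ => by split <;> [exact hμ0 y; exact le_rfl])
  -- union bound : P ≤ ∑ j, Q j
  have hunion : P ≤ ∑ j : Fin n, Q j := by
    rw [hP, hQ, Finset.sum_comm]
    apply Finset.sum_le_sum
    intro y _
    by_cases h : ∃ j : Fin n, ∀ i : Fin k, y i j = true
    · rw [if_pos h]
      obtain ⟨j0, hj0⟩ := h
      calc μ y = if ∀ i : Fin k, y i j0 = true then μ y else 0 := by rw [if_pos hj0]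
        _ ≤ ∑ j : Fin n, if ∀ i : Fin k, y i j = true then μ y else 0 := by
            apply Finset.single_le_sum (f := fun j => if ∀ i : Fin k, y i j = true then μ y else 0)
              (fun j _ => by split <;> [exact hμ0 y; exact le_rfl]) (Finset.mem_univ j0)
    · rw [if_neg h]
      exact Finset.sum_nonneg fun j _ => by split <;> [exact hμ0 y; exact le_rfl]
  have h1 : 1 - 2 * P ≤ d := by
    have := hle _ hmem0
    calc 1 - 2 * P = ∑ y, μ y * f y := (hT0).symm
      _ ≤ |∑ y, μ y * f y| := le_abs_self _
      _ ≤ d := this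
  have h2 : P ≤ n * d := by
    have hQd : ∀ j : Fin n, Q j ≤ d := fun j => (hTj j) ▸ hle _ (hmemj j)
    calc P ≤ ∑ j : Fin n, Q j := hunion
      _ ≤ ∑ _j : Fin n, d := Finset.sum_le_sum fun j _ => hQd j
      _ = n * d := by simp [mul_comm]
  rw [hdisc]
  rw [div_le_iff₀ (by positivity)]
  nlinarith
end

section
/- Let k ≥ 2 and ℓ, m ≥ 1 be integers and n = ℓ^{k−1}m. There exist functions Γ_1,…,Γ_{k−1} : [ℓ]^m → {0,1}^n such that for every f : {0,1}^m → {−1,1} and f' : {0,1}^n → {−1,1} satisfying f(z) = f'(z0^{n−m}) for all z ∈ {0,1}^m, and for every x ∈ {0,1}^n and S^1,…,S^{k−1} ∈ [ℓ]^m, one has F^f_k(x, S^1,…,S^{k−1}) = G^{f'}_k(x, Γ_1(S^1),…,Γ_{k−1}(S^{k−1})). -/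
open scoped BigOperators

/-- Pad an `m`-bit string with zeros to get an `n`-bit string `z0^{n-m}`. -/
def padZ (m n : ℕ) (z : Fin m → Bool) : Fin n → Bool :=
  fun j => if h : (j : ℕ) < m then z ⟨j, h⟩ else false

/-- `x ⇐ y^1,…,y^{K}`: the `n`-bit string `x_{i_1} x_{i_2} ⋯ x_{i_t} 0^{n-t}`,
where `i_1 < ⋯ < i_t` are the indices of the all-one columns of the matrix whose
rows are `y^1,…,y^{K}`. -/
def compress (n K : ℕ) (x : Fin n → Bool) (y : Fin K → Fin n → Bool) : Fin n → Bool :=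
  fun p =>
    let L := (Finset.univ.filter (fun j : Fin n => ∀ i : Fin K, y i j = true)).sort (· ≤ ·)
    if h : (p : ℕ) < L.length then x (L.get ⟨p, h⟩) else false

/-- `x ← S^1,…,S^{k-1}` for `x ∈ {0,1}^n` with `n = ℓ^{k-1}·m`, viewing `x` as `m`
consecutive blocks, each a `(k-1)`-dimensional array of side `ℓ` (block index is the
major index); the `α`-th bit of the result is `x[α][S^1[α],…,S^{k-1}[α]]`. -/
def maskFlat (k ℓ m n : ℕ) (hn : n = ℓ ^ (k - 1) * m)
    (x : Fin n → Bool) (S : Fin (k - 1) → Fin m → Fin ℓ) : Fin m → Bool :=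
  fun α =>
    x (Fin.cast (show m * ℓ ^ (k - 1) = n by rw [hn]; exact Nat.mul_comm _ _)
        (finProdFinEquiv (α, finFunctionFinEquiv (fun i => S i α))))

/-- Auxiliary: the position of the selected bit in block `α`. -/
def myE (K ℓ m n : ℕ) (hc : n = m * ℓ ^ K) (S : Fin K → Fin m → Fin ℓ) (α : Fin m) : Fin n :=
  Fin.cast hc.symm (finProdFinEquiv (α, finFunctionFinEquiv (fun i => S i α)))

/-- Auxiliary: the indicator strings `Γ_i`. -/
def myΓ (K ℓ m n : ℕ) (hc : n = m * ℓ ^ K) (i : Fin K) (S : Fin m → Fin ℓ) (p : Fin n) : Bool :=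
  decide (finFunctionFinEquiv.symm (finProdFinEquiv.symm (Fin.cast hc p)).2 i
    = S (finProdFinEquiv.symm (Fin.cast hc p)).1)

lemma myE_val (K ℓ m n : ℕ) (hc : n = m * ℓ ^ K) (S : Fin K → Fin m → Fin ℓ) (α : Fin m) :
    (myE K ℓ m n hc S α : ℕ)
      = (finFunctionFinEquiv (fun i => S i α) : ℕ) + ℓ ^ K * (α : ℕ) := by
  simp [myE]

lemma myE_strictMono (K ℓ m n : ℕ) (hc : n = m * ℓ ^ K) (S : Fin K → Fin m → Fin ℓ) :
    StrictMono (myE K ℓ m n hc S) := by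
  intro a b hab
  have ha : (finFunctionFinEquiv (fun i => S i a) : ℕ) < ℓ ^ K :=
    (finFunctionFinEquiv (fun i => S i a)).isLt
  have : (myE K ℓ m n hc S a : ℕ) < (myE K ℓ m n hc S b : ℕ) := by
    rw [myE_val, myE_val]
    calc (finFunctionFinEquiv (fun i => S i a) : ℕ) + ℓ ^ K * (a : ℕ)
        < ℓ ^ K + ℓ ^ K * (a : ℕ) := by omega
      _ = ℓ ^ K * ((a : ℕ) + 1) := by ring
      _ ≤ ℓ ^ K * (b : ℕ) := Nat.mul_le_mul_left _ (by exact_mod_cast hab)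
      _ ≤ (finFunctionFinEquiv (fun i => S i b) : ℕ) + ℓ ^ K * (b : ℕ) := Nat.le_add_left _ _
  exact this

lemma mem_iff (K ℓ m n : ℕ) (hc : n = m * ℓ ^ K) (S : Fin K → Fin m → Fin ℓ) (p : Fin n) :
    (∀ i : Fin K, myΓ K ℓ m n hc i (S i) p = true) ↔ ∃ α, p = myE K ℓ m n hc S α := by
  constructor
  · intro h
    refine ⟨(finProdFinEquiv.symm (Fin.cast hc p)).1, ?_⟩
    have hfun : (fun i => S i (finProdFinEquiv.symm (Fin.cast hc p)).1)
        = finFunctionFinEquiv.symm (finProdFinEquiv.symm (Fin.cast hc p)).2 := by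
      funext i
      have := h i
      simp only [myΓ, decide_eq_true_eq] at this
      exact this.symm
    have : myE K ℓ m n hc S (finProdFinEquiv.symm (Fin.cast hc p)).1
        = Fin.cast hc.symm (finProdFinEquiv (finProdFinEquiv.symm (Fin.cast hc p))) := by
      unfold myE
      rw [hfun]
      simp
    rw [this]
    simp only [Fin.ext_iff, Fin.coe_cast, Equiv.apply_symm_apply]
  · rintro ⟨α, rfl⟩
    intro i
    unfold myΓ myE
    have h1 : Fin.cast hc (Fin.cast hc.symm (finProdFinEquiv (α, finFunctionFinEquiv (fun i => S i α))))
        = finProdFinEquiv (α, finFunctionFinEquiv (fun i => S i α)) := by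
      simp [Fin.ext_iff]
    rw [h1, Equiv.symm_apply_apply]
    simp

lemma sort_eq (K ℓ m n : ℕ) (hc : n = m * ℓ ^ K) (S : Fin K → Fin m → Fin ℓ) :
    (Finset.univ.filter
        (fun j : Fin n => ∀ i : Fin K, myΓ K ℓ m n hc i (S i) j = true)).sort (· ≤ ·)
      = List.ofFn (myE K ℓ m n hc S) := by
  have hmono := myE_strictMono K ℓ m n hc S
  have hperm : ((Finset.univ.filter
      (fun j : Fin n => ∀ i : Fin K, myΓ K ℓ m n hc i (S i) j = true)).sort (· ≤ ·)).Perm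
      (List.ofFn (myE K ℓ m n hc S)) := by
    refine List.perm_ext_iff_of_nodup (Finset.sort_nodup _ _) (List.nodup_ofFn.2 hmono.injective) |>.2 ?_
    intro p
    simp only [Finset.mem_sort, Finset.mem_filter, Finset.mem_univ, true_and,
      List.mem_ofFn, Set.mem_range]
    rw [mem_iff]
    exact exists_congr fun α => eq_comm
  have hs2 : (List.ofFn (myE K ℓ m n hc S)).Pairwise (· ≤ ·) :=
    List.pairwise_ofFn.2 fun i j hij => (hmono hij).le
  exact List.Perm.eq_of_pairwise' (Finset.pairwise_sort _ _) hs2 hperm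

/-- There are maps `Γ_1,…,Γ_{k-1} : [ℓ]^m → {0,1}^n` such that for every
`f : {0,1}^m → {-1,1}` and `f' : {0,1}^n → {-1,1}` with `f(z) = f'(z0^{n-m})`,
`F^f_k(x, S^1,…,S^{k-1}) = G^{f'}_k(x, Γ_1(S^1),…,Γ_{k-1}(S^{k-1}))` for all inputs,
where `F^f_k(x,S) = f(x ← S)` and `G^{f'}_k(x,y) = f'(x ⇐ y)`. -/
theorem statement2 (k ℓ m : ℕ) (hk : 2 ≤ k) (hℓ : 1 ≤ ℓ) (hm : 1 ≤ m)
    (n : ℕ) (hn : n = ℓ ^ (k - 1) * m) :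
    ∃ Γ : Fin (k - 1) → (Fin m → Fin ℓ) → (Fin n → Bool),
      ∀ (f : (Fin m → Bool) → ℝ) (f' : (Fin n → Bool) → ℝ),
        (∀ z, f z = 1 ∨ f z = -1) → (∀ w, f' w = 1 ∨ f' w = -1) →
        (∀ z, f z = f' (padZ m n z)) →
        ∀ (x : Fin n → Bool) (S : Fin (k - 1) → Fin m → Fin ℓ),
          f (maskFlat k ℓ m n hn x S) = f' (compress n (k - 1) x (fun i => Γ i (S i))) := by
  have hc : n = m * ℓ ^ (k - 1) := by rw [hn, Nat.mul_comm]
  refine ⟨fun i S => myΓ (k - 1) ℓ m n hc i S, ?_⟩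
  intro f f' _ _ hff x S
  have hkey : compress n (k - 1) x (fun i => myΓ (k - 1) ℓ m n hc i (S i))
      = padZ m n (maskFlat k ℓ m n hn x S) := by
    funext p
    have hL := sort_eq (k - 1) ℓ m n hc S
    simp only [compress, padZ, hL, List.length_ofFn]
    by_cases hp : (p : ℕ) < m
    · rw [dif_pos hp, dif_pos hp]
      simp only [List.get_eq_getElem, hL, List.getElem_ofFn]
      unfold maskFlat myE
      congr 1
    · rw [dif_neg hp, dif_neg hp]
  rw [hkey, ← hff]
end

section
/- Let k ≥ 2, ℓ, m ≥ 1 be integers and fix S^1_0, S^1_1, …, S^{k−1}_0, S^{k−1}_1 ∈ [ℓ]^m. For u ∈ {0,1}^{k−1} define Z_u = {(α, S^1_{u_1}[α], …, S^{k−1}_{u_{k−1}}[α]) : α ∈ [m]} ⊆ [m] × [ℓ]^{k−1} and Y_u = {(α, S^1_{u_1}[α], …, S^{k−1}_{u_{k−1}}[α]) : α ∈ [m] such that S^j_0[α] ≠ S^j_1[α] for every j with u_j = 1}. Then: (i) the sets Y_u, u ∈ {0,1}^{k−1}, are pairwise disjoint; (ii) ∪_{u∈{0,1}^{k−1}} Y_u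 = ∪_{u∈{0,1}^{k−1}} Z_u =: Z; and (iii) |Z| ≥ 2^{k−1}m − (2^{k−1}−1)r, where r = Σ_{i=1}^{k−1} |{α ∈ [m] : S^i_0[α] = S^i_1[α]}|. -/
open scoped BigOperators

/-- `Z_u = {(α, S^1_{u_1}[α], …, S^{k-1}_{u_{k-1}}[α]) : α ∈ [m]}`, the set of positions
(in `[m] × [ℓ]^{k-1}`) unmasked by the vectors selected by `u ∈ {0,1}^{k-1}`. -/
def Zu {K ℓ m : ℕ} (S0 S1 : Fin K → Fin m → Fin ℓ) (u : Fin K → Bool) :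
    Finset (Fin m × (Fin K → Fin ℓ)) :=
  Finset.univ.image (fun α : Fin m => (α, fun j => (if u j then S1 j else S0 j) α))

/-- `Y_u = {(α, S^1_{u_1}[α], …, S^{k-1}_{u_{k-1}}[α]) : α such that S^j_0[α] ≠ S^j_1[α]
for every j with u_j = 1}`. -/
def Yu {K ℓ m : ℕ} (S0 S1 : Fin K → Fin m → Fin ℓ) (u : Fin K → Bool) :
    Finset (Fin m × (Fin K → Fin ℓ)) :=
  (Finset.univ.filter (fun α : Fin m => ∀ j, u j = true → S0 j α ≠ S1 j α)).image
    (fun α : Fin m => (α, fun j => (if u j then S1 j else S0 j) α))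

section aux
variable {K ℓ m : ℕ} (S0 S1 : Fin K → Fin m → Fin ℓ)

lemma mk_inj (g : Fin m → (Fin K → Fin ℓ)) :
    Function.Injective (fun α : Fin m => (α, g α)) :=
  fun a b h => congrArg Prod.fst h

lemma Yu_card (u : Fin K → Bool) :
    (Yu S0 S1 u).card
      = (Finset.univ.filter (fun α : Fin m => ∀ j, u j = true → S0 j α ≠ S1 j α)).card :=
  Finset.card_image_of_injective _ (mk_inj _)

lemma Yu_disjoint {u v : Fin K → Bool} (huv : u ≠ v) :
    Disjoint (Yu S0 S1 u) (Yu S0 S1 v) := by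
  rw [Finset.disjoint_left]
  rintro p hu hv
  simp only [Yu, Finset.mem_image, Finset.mem_filter, Finset.mem_univ, true_and] at hu hv
  obtain ⟨α, hα, rfl⟩ := hu
  obtain ⟨β, hβ, hpe⟩ := hv
  obtain ⟨hβα, hfe⟩ := Prod.mk.injEq .. ▸ hpe
  subst hβα
  obtain ⟨j, hj⟩ := Function.ne_iff.mp huv
  have hfj := congrFun hfe j
  cases hu' : u j <;> cases hv' : v j <;> simp [hu', hv'] at hj hfj
  · exact hβ j hv' hfj.symm
  · exact hα j hu' hfj
end aux

/-- (i) the `Y_u` are pairwise disjoint; (ii) `∪_u Y_u = ∪_u Z_u =: Z`;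
(iii) `|Z| ≥ 2^{k-1}m − (2^{k-1}−1)r` where
`r = Σ_i |{α : S^i_0[α] = S^i_1[α]}|`. -/
theorem statement8 (k ℓ m : ℕ) (hk : 2 ≤ k) (hℓ : 1 ≤ ℓ) (hm : 1 ≤ m)
    (S0 S1 : Fin (k - 1) → Fin m → Fin ℓ)
    (r : ℕ)
    (hr : r = ∑ i : Fin (k - 1),
      (Finset.univ.filter (fun α : Fin m => S0 i α = S1 i α)).card) :
    (∀ u v : Fin (k - 1) → Bool, u ≠ v → Disjoint (Yu S0 S1 u) (Yu S0 S1 v)) ∧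
    Finset.univ.biUnion (Yu S0 S1) = Finset.univ.biUnion (Zu S0 S1) ∧
    ((Finset.univ.biUnion (Zu S0 S1)).card : ℤ) ≥
      2 ^ (k - 1) * m - (2 ^ (k - 1) - 1) * r := by
  -- part (ii)
  have hii : Finset.univ.biUnion (Yu S0 S1) = Finset.univ.biUnion (Zu S0 S1) := by
    ext p
    simp only [Finset.mem_biUnion, Finset.mem_univ, true_and]
    constructor
    · rintro ⟨u, hu⟩
      exact ⟨u, Finset.image_subset_image (Finset.filter_subset _ _) hu⟩
    · rintro ⟨u, hu⟩
      simp only [Zu, Finset.mem_image, Finset.mem_univ, true_and] at hu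
      obtain ⟨α, rfl⟩ := hu
      refine ⟨fun j => u j && decide (S0 j α ≠ S1 j α), ?_⟩
      simp only [Yu, Finset.mem_image, Finset.mem_filter, Finset.mem_univ, true_and]
      refine ⟨α, ?_, ?_⟩
      · intro j hj
        simp only [Bool.and_eq_true, decide_eq_true_eq] at hj
        exact hj.2
      · refine Prod.ext rfl ?_
        funext j
        by_cases h0 : S0 j α = S1 j α
        · cases hj : u j <;> simp [hj, h0]
        · cases hj : u j <;> simp [hj, h0]
  refine ⟨fun u v huv => Yu_disjoint S0 S1 huv, hii, ?_⟩
  have hdisj : ∀ u ∈ (Finset.univ : Finset (Fin (k-1) → Bool)), ∀ v ∈ Finset.univ,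
      u ≠ v → Disjoint (Yu S0 S1 u) (Yu S0 S1 v) :=
    fun u _ v _ huv => Yu_disjoint S0 S1 huv
  have hcard : (Finset.univ.biUnion (Zu S0 S1)).card
      = ∑ u : Fin (k-1) → Bool, (Yu S0 S1 u).card := by
    rw [← hii, Finset.card_biUnion hdisj]
  have hYlb : ∀ u : Fin (k-1) → Bool, (m : ℤ) - r ≤ ((Yu S0 S1 u).card : ℤ) := by
    intro u
    rw [Yu_card]
    have hsplit := Finset.card_filter_add_card_filter_not
      (s := (Finset.univ : Finset (Fin m)))
      (p := fun α : Fin m => ∀ j, u j = true → S0 j α ≠ S1 j α)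
    have hbad : (Finset.univ.filter
        (fun α : Fin m => ¬ ∀ j, u j = true → S0 j α ≠ S1 j α)).card ≤ r := by
      have hsub : (Finset.univ.filter
          (fun α : Fin m => ¬ ∀ j, u j = true → S0 j α ≠ S1 j α))
          ⊆ Finset.univ.biUnion
            (fun j : Fin (k-1) => Finset.univ.filter (fun α : Fin m => S0 j α = S1 j α)) := by
        intro α hα
        simp only [Finset.mem_filter, Finset.mem_univ, true_and] at hα
        push_neg at hα
        obtain ⟨j, _, hj2⟩ := hα
        simp only [Finset.mem_biUnion, Finset.mem_univ, true_and, Finset.mem_filter]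
        exact ⟨j, hj2⟩
      calc _ ≤ _ := Finset.card_le_card hsub
        _ ≤ ∑ j : Fin (k-1), (Finset.univ.filter (fun α : Fin m => S0 j α = S1 j α)).card :=
          Finset.card_biUnion_le
        _ = r := hr.symm
    have hmm : (Finset.univ : Finset (Fin m)).card = m := by simp
    omega
  have hY0 : ((Yu S0 S1 (fun _ => false)).card : ℤ) = m := by
    rw [Yu_card]
    norm_num
  have hcardu : (Finset.univ : Finset (Fin (k-1) → Bool)).card = 2 ^ (k-1) := by
    rw [Finset.card_univ, Fintype.card_fun, Fintype.card_bool, Fintype.card_fin]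
  have hec : ((Finset.univ.erase (fun _ : Fin (k-1) => false)).card : ℤ) = 2 ^ (k-1) - 1 := by
    rw [Finset.card_erase_of_mem (Finset.mem_univ _), hcardu]
    have h1 : 1 ≤ 2 ^ (k-1) := Nat.one_le_two_pow
    push_cast [Nat.cast_sub h1]
    ring
  have hlb : ((Finset.univ.erase (fun _ : Fin (k-1) => false)).card : ℤ) * ((m : ℤ) - r)
      ≤ ∑ u ∈ Finset.univ.erase (fun _ : Fin (k-1) => false), ((Yu S0 S1 u).card : ℤ) := by
    have := Finset.card_nsmul_le_sum (Finset.univ.erase (fun _ : Fin (k-1) => false))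
      (fun u => ((Yu S0 S1 u).card : ℤ)) ((m : ℤ) - r) (fun u _ => hYlb u)
    simpa [nsmul_eq_mul] using this
  have herase : ∑ u : Fin (k-1) → Bool, ((Yu S0 S1 u).card : ℤ)
      = ((Yu S0 S1 (fun _ => false)).card : ℤ)
        + ∑ u ∈ Finset.univ.erase (fun _ : Fin (k-1) => false), ((Yu S0 S1 u).card : ℤ) :=
    (Finset.add_sum_erase _ _ (Finset.mem_univ _)).symm
  have hsum : (2 ^ (k-1) * m - (2 ^ (k-1) - 1) * r : ℤ)
      ≤ ∑ u : Fin (k-1) → Bool, ((Yu S0 S1 u).card : ℤ) := by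
    rw [herase, hY0]
    rw [hec] at hlb
    nlinarith [hlb]
  rw [ge_iff_le, hcard]
  push_cast
  exact hsum
end

section
/- (Approximation/Orthogonality duality.) Let f : {0,1}^m → ℝ be a function whose δ-approximate degree equals d, with d ≥ 1. Then there exist a function g : {0,1}^m → {−1,1} and a probability distribution μ on {0,1}^m such that g is (μ,d)-orthogonal and Corr_μ(f,g) > δ. -/
open scoped BigOperators

/-- The character `χ_S(x) = (-1)^{Σ_{i∈S} x_i}`. -/
noncomputable def chiChar {m : ℕ} (S : Finset (Fin m)) (z : Fin m → Bool) : ℝ :=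
  ∏ i ∈ S, (if z i then (-1 : ℝ) else 1)

/-- `φ : {0,1}^m → ℝ` is (the evaluation of) a multilinear real polynomial of degree
at most `d`: a linear combination of the characters `χ_S` with `|S| ≤ d`. -/
def DegLE (m d : ℕ) (φ : (Fin m → Bool) → ℝ) : Prop :=
  ∃ c : Finset (Fin m) → ℝ,
    ∀ z, φ z = ∑ S ∈ Finset.univ.filter (fun S : Finset (Fin m) => S.card ≤ d),
      c S * chiChar S z

/-- The `δ`-approximate degree of `f`: the least `d` such that some multilinear real
polynomial `φ` of degree at most `d` satisfies `|f(x) − φ(x)| ≤ δ` for all `x`. -/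
noncomputable def approxDeg (m : ℕ) (δ : ℝ) (f : (Fin m → Bool) → ℝ) : ℕ :=
  sInf { d | ∃ φ, DegLE m d φ ∧ ∀ z, |f z - φ z| ≤ δ }

/-- `g` is `(μ,d)`-orthogonal: `E_{x∼μ}[g(x)χ_S(x)] = 0` for every `S` with `|S| < d`. -/
def Orthogonal {m : ℕ} (μ : (Fin m → Bool) → ℝ) (d : ℕ) (g : (Fin m → Bool) → ℝ) : Prop :=
  ∀ S : Finset (Fin m), S.card < d → ∑ z, μ z * g z * chiChar S z = 0

/-- Approximation/Orthogonality duality: if `deg_δ(f) = d ≥ 1`, then there are a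
function `g : {0,1}^m → {-1,1}` and a probability distribution `μ` on `{0,1}^m` such
that `g` is `(μ,d)`-orthogonal and `Corr_μ(f,g) > δ`. -/
theorem statement9 (m d : ℕ) (δ : ℝ) (f : (Fin m → Bool) → ℝ)
    (hdeg : approxDeg m δ f = d) (hd : 1 ≤ d) :
    ∃ (g : (Fin m → Bool) → ℝ) (μ : (Fin m → Bool) → ℝ),
      (∀ z, g z = 1 ∨ g z = -1) ∧ IsProbDist μ ∧ Orthogonal μ d g ∧
      δ < ∑ z, μ z * f z * g z := by
  classical
  set A : Set ℕ := { n | ∃ φ, DegLE m n φ ∧ ∀ z, |f z - φ z| ≤ δ } with hA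
  have hAne : A.Nonempty := by
    by_contra h
    rw [Set.not_nonempty_iff_eq_empty] at h
    rw [approxDeg, ← hA, h, Nat.sInf_empty] at hdeg
    omega
  have hdA : d ∈ A := by
    rw [← hdeg]; exact Nat.sInf_mem hAne
  have hδ : 0 ≤ δ := by
    obtain ⟨φ, _, hφ⟩ := hdA
    have := hφ (fun _ => false)
    have := abs_nonneg (f (fun _ => false) - φ (fun _ => false))
    linarith
  have hd1 : d - 1 ∉ A := by
    intro h
    have := Nat.sInf_le h
    rw [approxDeg, ← hA] at hdeg
    omega
  set V : Submodule ℝ ((Fin m → Bool) → ℝ) :=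
    Submodule.span ℝ (Set.range
      (fun S : {S : Finset (Fin m) // S.card < d} => chiChar S.1)) with hVdef
  -- every element of V has degree ≤ d - 1
  have hVdeg : ∀ v ∈ V, DegLE m (d - 1) v := by
    intro v hv
    rw [hVdef, Submodule.mem_span_range_iff_exists_fun] at hv
    obtain ⟨c, hc⟩ := hv
    refine ⟨fun S => if h : S.card < d then c ⟨S, h⟩ else 0, fun z => ?_⟩
    have hcz := congrFun hc z
    rw [Finset.sum_apply] at hcz
    rw [← hcz]
    rw [Finset.sum_subtype (p := fun S : Finset (Fin m) => S.card < d)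
      (Finset.univ.filter (fun S : Finset (Fin m) => S.card ≤ d - 1))
      (fun S => by simp only [Finset.mem_filter, Finset.mem_univ, true_and]; omega)
      (fun S => (if h : S.card < d then c ⟨S, h⟩ else 0) * chiChar S z)]
    refine Finset.sum_congr rfl (fun S _ => ?_)
    rw [dif_pos S.2, Pi.smul_apply, smul_eq_mul]
  have hV : ∀ v ∈ V, δ < dist f v := by
    intro v hv
    by_contra h
    push_neg at h
    apply hd1
    refine ⟨v, hVdeg v hv, fun z => ?_⟩
    calc |f z - v z| = ‖(f - v) z‖ := by rw [Pi.sub_apply, Real.norm_eq_abs]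
    _ ≤ ‖f - v‖ := norm_le_pi_norm _ z
    _ = dist f v := (dist_eq_norm f v).symm
    _ ≤ δ := h
  haveI hVcl : IsClosed (V : Set ((Fin m → Bool) → ℝ)) := Submodule.closed_of_finiteDimensional V
  obtain ⟨v₀, hv₀V, hv₀⟩ := hVcl.exists_infDist_eq_dist ⟨0, V.zero_mem⟩ f
  have hδinf : δ < Metric.infDist f ↑V := by rw [hv₀]; exact hV v₀ hv₀V
  -- quotient norm is at least infDist
  have hnorm : δ < ‖(Submodule.Quotient.mk f : ((Fin m → Bool) → ℝ) ⧸ V)‖ := by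
    have hle : Metric.infDist f ↑V ≤ ‖(Submodule.Quotient.mk f : ((Fin m → Bool) → ℝ) ⧸ V)‖ := by
      refine le_of_forall_pos_le_add (fun ε hε => ?_)
      obtain ⟨w, hw, hwn⟩ :=
        Submodule.Quotient.norm_mk_lt (Submodule.Quotient.mk f : ((Fin m → Bool) → ℝ) ⧸ V) hε
      have hfw : f - w ∈ V := by
        have := (Submodule.Quotient.eq V).1 hw
        simpa using V.neg_mem this
      have h1 : Metric.infDist f ↑V ≤ dist f (f - w) :=
        Metric.infDist_le_dist_of_mem hfw
      rw [dist_eq_norm, sub_sub_cancel] at h1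
      linarith
    linarith
  have hfne : (Submodule.Quotient.mk f : ((Fin m → Bool) → ℝ) ⧸ V) ≠ 0 := by
    intro h
    rw [h, norm_zero] at hnorm
    linarith
  obtain ⟨G, hG1, hGf⟩ := exists_dual_vector ℝ (Submodule.Quotient.mk f : ((Fin m → Bool) → ℝ) ⧸ V) (norm_ne_zero_iff.2 hfne)
  set L : ((Fin m → Bool) → ℝ) →ₗ[ℝ] ℝ := (G : (((Fin m → Bool) → ℝ) ⧸ V) →ₗ[ℝ] ℝ).comp V.mkQ with hLdef
  set p : (Fin m → Bool) → ℝ := fun z => L (fun j => if z = j then (1 : ℝ) else 0) with hp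
  have hL : ∀ x : (Fin m → Bool) → ℝ, L x = ∑ z, x z * p z := by
    intro x
    conv_lhs => rw [pi_eq_sum_univ x]
    rw [map_sum]
    exact Finset.sum_congr rfl (fun z _ => by rw [map_smul, smul_eq_mul])
  have hLbound : ∀ x : (Fin m → Bool) → ℝ, |L x| ≤ ‖x‖ := by
    intro x
    have h1 : ‖G (Submodule.Quotient.mk x : ((Fin m → Bool) → ℝ) ⧸ V)‖ ≤ ‖G‖ * ‖(Submodule.Quotient.mk x : ((Fin m → Bool) → ℝ) ⧸ V)‖ :=
      G.le_opNorm _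
    have h2 : ‖(Submodule.Quotient.mk x : ((Fin m → Bool) → ℝ) ⧸ V)‖ ≤ ‖x‖ := Submodule.Quotient.norm_mk_le V x
    have : L x = G (Submodule.Quotient.mk x : ((Fin m → Bool) → ℝ) ⧸ V) := by
      simp [hLdef, Submodule.mkQ_apply]
    rw [this, ← Real.norm_eq_abs]
    calc ‖G (Submodule.Quotient.mk x : ((Fin m → Bool) → ℝ) ⧸ V)‖ ≤ ‖G‖ * ‖(Submodule.Quotient.mk x : ((Fin m → Bool) → ℝ) ⧸ V)‖ := h1
    _ = ‖(Submodule.Quotient.mk x : ((Fin m → Bool) → ℝ) ⧸ V)‖ := by rw [hG1, one_mul]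
    _ ≤ ‖x‖ := h2
  have hLf : δ < L f := by
    have : L f = G (Submodule.Quotient.mk f : ((Fin m → Bool) → ℝ) ⧸ V) := by
      simp [hLdef, Submodule.mkQ_apply]
    rw [this, hGf]
    exact hnorm
  have hLfpos : 0 < L f := lt_of_le_of_lt hδ hLf
  -- L vanishes on characters of small degree
  have hLchi : ∀ S : Finset (Fin m), S.card < d → L (chiChar S) = 0 := by
    intro S hS
    have hmem : chiChar S ∈ V := by
      rw [hVdef]
      exact Submodule.subset_span ⟨⟨S, hS⟩, rfl⟩
    have : V.mkQ (chiChar S) = 0 := by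
      rw [Submodule.mkQ_apply, Submodule.Quotient.mk_eq_zero]
      exact hmem
    simp [hLdef, this]
  set s : ℝ := ∑ z, |p z| with hs
  set g : (Fin m → Bool) → ℝ := fun z => if p z < 0 then (-1 : ℝ) else 1 with hg
  have hgz : ∀ z, g z = 1 ∨ g z = -1 := by
    intro z; rw [hg]; dsimp only; split <;> simp
  have hgmul : ∀ z, |p z| * g z = p z := by
    intro z
    by_cases h : p z < 0
    · rw [hg]; dsimp only; rw [if_pos h, abs_of_neg h]; ring
    · rw [hg]; dsimp only; rw [if_neg h, abs_of_nonneg (not_lt.1 h)]; ring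
  have hgn : ‖g‖ ≤ 1 := by
    refine pi_norm_le_iff_of_nonneg zero_le_one |>.2 (fun z => ?_)
    rcases hgz z with h | h <;> rw [h] <;> simp
  have hs1 : s ≤ 1 := by
    have hLg : L g = s := by
      rw [hL g, hs]
      refine Finset.sum_congr rfl (fun z _ => ?_)
      by_cases h : p z < 0
      · rw [hg]; dsimp only; rw [if_pos h, abs_of_neg h]; ring
      · rw [hg]; dsimp only; rw [if_neg h, abs_of_nonneg (not_lt.1 h)]; ring
    calc s = L g := hLg.symm
    _ ≤ |L g| := le_abs_self _
    _ ≤ ‖g‖ := hLbound g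
    _ ≤ 1 := hgn
  have hspos : 0 < s := by
    rcases lt_or_eq_of_le (Finset.sum_nonneg (fun z _ => abs_nonneg (p z)) : 0 ≤ s) with h | h
    · exact h
    · exfalso
      have hz : ∀ z ∈ Finset.univ, |p z| = 0 :=
        (Finset.sum_eq_zero_iff_of_nonneg (fun z _ => abs_nonneg (p z))).1 h.symm
      have hLf0 : L f = 0 := by
        rw [hL f]
        refine Finset.sum_eq_zero (fun z _ => ?_)
        have := abs_eq_zero.1 (hz z (Finset.mem_univ z))
        rw [this, mul_zero]
      rw [hLf0] at hLfpos
      exact lt_irrefl 0 hLfpos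
  refine ⟨g, fun z => |p z| / s, hgz, ⟨fun z => div_nonneg (abs_nonneg _) hspos.le, ?_⟩, ?_, ?_⟩
  · rw [← Finset.sum_div, ← hs, div_self hspos.ne']
  · intro S hS
    have : ∑ z, |p z| / s * g z * chiChar S z = (∑ z, chiChar S z * p z) / s := by
      rw [Finset.sum_div]
      refine Finset.sum_congr rfl (fun z _ => ?_)
      rw [div_mul_eq_mul_div, div_mul_eq_mul_div, hgmul z]
      ring
    rw [this, ← hL (chiChar S), hLchi S hS, zero_div]
  · have key : ∑ z, |p z| / s * f z * g z = L f / s := by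
      rw [hL f, Finset.sum_div]
      refine Finset.sum_congr rfl (fun z _ => ?_)
      rw [div_mul_eq_mul_div, div_mul_eq_mul_div, mul_right_comm, hgmul z]
      ring
    rw [key]
    calc δ < L f := hLf
    _ ≤ L f / s := by
      rw [le_div_iff₀ hspos]
      exact mul_le_of_le_one_right hLfpos.le hs1
end
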